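/- Let R be a separation system of a finite graph G, I a set of R-inseparable vertex sets such that every separation in R weakly separates some two sets in I, and suppose R separates I well. Then every ≤-minimal element of R is extremal in R; in particular, if R is nonempty then R contains an extremal separation. -/

import Mathlib

open Set

variable {V : Type*}

/-- A separation of a graph `G`: a pair of vertex sets covering `V` such that
every edge lies within one of the sides. -/
def IsSep (G : SimpleGraph V) (p : Set V × Set V) : Prop :=
  p.1 ∪ p.2 = Set.univ ∧
    ∀ x y, G.Adj x y → (x ∈ p.1 ∧ y ∈ p.1) ∨ (x ∈ p.2 ∧ y ∈ p.2)

/-- The partial order on separations: `(A,B) ≤ (C,D)` iff `A ⊆ C` and `B ⊇ D`. -/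
def SepLE (p q : Set V × Set V) : Prop :=
  p.1 ⊆ q.1 ∧ q.2 ⊆ p.2

/-- The inverse of a separation. -/
def flipSep (p : Set V × Set V) : Set V × Set V := (p.2, p.1)

/-- A separation is proper if both sides minus the other are nonempty. -/
def IsProper (p : Set V × Set V) : Prop :=
  (p.1 \ p.2).Nonempty ∧ (p.2 \ p.1).Nonempty

/-- `≤`-comparability of separations. -/
def SepComparable (p q : Set V × Set V) : Prop := SepLE p q ∨ SepLE q p

/-- Two separations are nested if one is comparable with the other or its inverse. -/
def Nested (p q : Set V × Set V) : Prop :=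
  SepComparable p q ∨ SepComparable p (flipSep q)

/-- A separation `(A,B)` separates a vertex set `I` if `I` meets both `A∖B` and `B∖A`. -/
def SepSeparates (p : Set V × Set V) (I : Set V) : Prop :=
  (I ∩ (p.1 \ p.2)).Nonempty ∧ (I ∩ (p.2 \ p.1)).Nonempty

/-- A set is `S`-inseparable if no separation in `S` separates it. -/
def Insep (S : Set (Set V × Set V)) (U : Set V) : Prop :=
  ∀ p ∈ S, ¬ SepSeparates p U

/-- An `S`-block: a maximal `S`-inseparable vertex set. -/
def IsBlock (S : Set (Set V × Set V)) (b : Set V) : Prop :=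
  Insep S b ∧ ∀ b', Insep S b' → b ⊆ b' → b' = b

/-- A separation system: a symmetric set of proper separations. -/
def SepSystem (G : SimpleGraph V) (N : Set (Set V × Set V)) : Prop :=
  (∀ p ∈ N, IsSep G p ∧ IsProper p) ∧ ∀ p ∈ N, flipSep p ∈ N

/-- A nested separation system. -/
def NestedSys (G : SimpleGraph V) (N : Set (Set V × Set V)) : Prop :=
  SepSystem G N ∧ ∀ p ∈ N, ∀ q ∈ N, Nested p q

/-- Strict version of `SepLE`. -/
def SepLT (p q : Set V × Set V) : Prop := SepLE p q ∧ p ≠ q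

/-- `p` is a predecessor of `q` in `(N, ≤)`. -/
def SepPred (N : Set (Set V × Set V)) (p q : Set V × Set V) : Prop :=
  p ∈ N ∧ q ∈ N ∧ SepLT p q ∧ ∀ r ∈ N, ¬ (SepLT p r ∧ SepLT r q)

/-- The relation `∼` on a nested separation system `N`:
`(A,B) ∼ (C,D)` iff they are equal or `(B,A)` is a predecessor of `(C,D)` in `(N,≤)`. -/
def SimRel (N : Set (Set V × Set V)) (p q : Set V × Set V) : Prop :=
  p = q ∨ SepPred N (flipSep p) q

/-- The `∼`-equivalence class of a separation `p ∈ N`. -/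
def classOf (N : Set (Set V × Set V)) (p : Set V × Set V) : Set (Set V × Set V) :=
  {q | q ∈ N ∧ SimRel N p q}

/-- The part `V_t` associated with a node `t` of the structure tree. -/
def Vpart (t : Set (Set V × Set V)) : Set V := {v | ∀ p ∈ t, v ∈ p.1}

/-- The four corner separations of the cross-diagram of two separations. -/
def cornerSep (p q : Set V × Set V) : Fin 4 → Set V × Set V :=
  ![(p.1 ∩ q.1, p.2 ∪ q.2), (p.1 ∩ q.2, p.2 ∪ q.1),
    (p.2 ∩ q.1, p.1 ∪ q.2), (p.2 ∩ q.2, p.1 ∪ q.1)]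

/-- `p` weakly separates `I₁` and `I₂`. -/
def WeaklySep (p : Set V × Set V) (I₁ I₂ : Set V) : Prop :=
  (I₁ ⊆ p.1 ∧ I₂ ⊆ p.2) ∨ (I₁ ⊆ p.2 ∧ I₂ ⊆ p.1)

/-- `S` separates the collection `I` well. -/
def SeparatesWell (S : Set (Set V × Set V)) (I : Set (Set V)) : Prop :=
  ∀ p ∈ S, ∀ q ∈ S, ¬ Nested p q →
    ∀ I₁ ∈ I, ∀ I₂ ∈ I, I₁ ⊆ p.1 ∩ q.1 → I₂ ⊆ p.2 ∩ q.2 →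
      ∃ r ∈ S, I₁ ⊆ r.1 ∧ r.1 ⊆ p.1 ∩ q.1 ∧ p.2 ∪ q.2 ⊆ r.2

/-- An extremal separation of a separation system `S`. -/
def Extremal (S : Set (Set V × Set V)) (p : Set V × Set V) : Prop :=
  ∀ q ∈ S, SepLE p q ∨ SepLE p (flipSep q)

/-- A tight separation: every vertex of the separator has neighbours on both sides. -/
def Tight (G : SimpleGraph V) (p : Set V × Set V) : Prop :=
  ∀ v ∈ p.1 ∩ p.2, (∃ x ∈ p.1 \ p.2, G.Adj v x) ∧ ∃ y ∈ p.2 \ p.1, G.Adj v y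

lemma flipSep_flipSep (p : Set V × Set V) : flipSep (flipSep p) = p := rfl

lemma insep_side {G : SimpleGraph V} {R : Set (Set V × Set V)} (hR : SepSystem G R)
    {q : Set V × Set V} (hq : q ∈ R) {U : Set V} (hU : Insep R U) :
    U ⊆ q.1 ∨ U ⊆ q.2 := by
  have hcov := (hR.1 q hq).1.1
  have h := hU q hq
  simp only [SepSeparates, not_and_or, Set.not_nonempty_iff_eq_empty] at h
  rcases h with h | h
  · right; intro v hv
    have hvu : v ∈ q.1 ∪ q.2 := by rw [hcov]; trivial
    rcases hvu with h1 | h2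
    · by_contra h2
      exact (h ▸ (⟨hv, h1, h2⟩ : v ∈ U ∩ (q.1 \ q.2)) : v ∈ (∅ : Set V)).elim
    · exact h2
  · left; intro v hv
    have hvu : v ∈ q.1 ∪ q.2 := by rw [hcov]; trivial
    rcases hvu with h1 | h2
    · exact h1
    · by_contra h1
      exact (h ▸ (⟨hv, h2, h1⟩ : v ∈ U ∩ (q.2 \ q.1)) : v ∈ (∅ : Set V)).elim

lemma not_nested_flip {p q : Set V × Set V} (h : ¬ Nested p q) : ¬ Nested p (flipSep q) := by
  intro hn
  rcases hn with h1 | h2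
  · exact h (Or.inr h1)
  · rw [flipSep_flipSep] at h2; exact h (Or.inl h2)

lemma key_step {G : SimpleGraph V} {R : Set (Set V × Set V)} (hR : SepSystem G R)
    {I : Set (Set V)} (hwell : SeparatesWell R I)
    {p : Set V × Set V} (hp : p ∈ R) (hmin : ∀ q ∈ R, SepLE q p → q = p)
    {q : Set V × Set V} (hq : q ∈ R) (hnn : ¬ Nested p q)
    {X Y : Set V} (hX : X ∈ I) (hY : Y ∈ I)
    (hX1 : X ⊆ p.1 ∩ q.1) (hY2 : Y ⊆ p.2 ∩ q.2) : SepLE p q := by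
  obtain ⟨r, hr, _, hr1, hr2⟩ := hwell p hp q hq hnn X hX Y hY hX1 hY2
  have hrp : SepLE r p :=
    ⟨hr1.trans (Set.inter_subset_left), (Set.subset_union_left).trans hr2⟩
  have := hmin r hr hrp
  subst this
  exact ⟨hr1.trans (Set.inter_subset_right), (Set.subset_union_right).trans hr2⟩

/-- In an `I`-relevant separation system `R` that separates a set `I`
of `R`-inseparable sets well, every `≤`-minimal separation is extremal; in particular
a nonempty such `R` contains an extremal separation. -/
theorem minimal_extremal [Fintype V] (G : SimpleGraph V) (R : Set (Set V × Set V))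
    (hR : SepSystem G R) (I : Set (Set V)) (hins : ∀ U ∈ I, Insep R U)
    (hrel : ∀ p ∈ R, ∃ I₁ ∈ I, ∃ I₂ ∈ I, I₁ ≠ I₂ ∧ WeaklySep p I₁ I₂)
    (hwell : SeparatesWell R I) :
    (∀ p ∈ R, (∀ q ∈ R, SepLE q p → q = p) → Extremal R p) ∧
    (R.Nonempty → ∃ p ∈ R, Extremal R p) := by
  constructor
  · intro p hp hmin q hq
    by_cases hn : Nested p q
    · rcases hn with (h1 | h2) | (h3 | h4)
      · exact Or.inl h1
      · have := hmin q hq h2; subst this; exact Or.inl ⟨subset_rfl, subset_rfl⟩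
      · exact Or.inr h3
      · have := hmin (flipSep q) (hR.2 q hq) h4
        rw [← this]; exact Or.inr ⟨subset_rfl, subset_rfl⟩
    · -- crossing case
      obtain ⟨I₁, hI₁, I₂, hI₂, _, hw⟩ := hrel p hp
      obtain ⟨A, hA, B, hB, hA1, hB2⟩ :
          ∃ A ∈ I, ∃ B ∈ I, A ⊆ p.1 ∧ B ⊆ p.2 := by
        rcases hw with ⟨h1, h2⟩ | ⟨h1, h2⟩
        · exact ⟨I₁, hI₁, I₂, hI₂, h1, h2⟩
        · exact ⟨I₂, hI₂, I₁, hI₁, h2, h1⟩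
      obtain ⟨J₁, hJ₁, J₂, hJ₂, _, hw'⟩ := hrel q hq
      obtain ⟨C, hC, D, hD, hC1, hD2⟩ :
          ∃ C ∈ I, ∃ D ∈ I, C ⊆ q.1 ∧ D ⊆ q.2 := by
        rcases hw' with ⟨h1, h2⟩ | ⟨h1, h2⟩
        · exact ⟨J₁, hJ₁, J₂, hJ₂, h1, h2⟩
        · exact ⟨J₂, hJ₂, J₁, hJ₁, h2, h1⟩
      have hfq : flipSep q ∈ R := hR.2 q hq
      have hnnf : ¬ Nested p (flipSep q) := not_nested_flip hn
      rcases insep_side hR hq (hins A hA) with hAq | hAq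
      · rcases insep_side hR hq (hins B hB) with hBq | hBq
        · -- A ⊆ q.1, B ⊆ q.1 : use D ⊆ q.2
          rcases insep_side hR hp (hins D hD) with hDp | hDp
          · exact Or.inr (key_step hR hwell hp hmin hfq hnnf hD hB
              (Set.subset_inter hDp hD2) (Set.subset_inter hB2 hBq))
          · exact Or.inl (key_step hR hwell hp hmin hq hn hA hD
              (Set.subset_inter hA1 hAq) (Set.subset_inter hDp hD2))
        · exact Or.inl (key_step hR hwell hp hmin hq hn hA hB
            (Set.subset_inter hA1 hAq) (Set.subset_inter hB2 hBq))
      · rcases insep_side hR hq (hins B hB) with hBq | hBq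
        · exact Or.inr (key_step hR hwell hp hmin hfq hnnf hA hB
            (Set.subset_inter hA1 hAq) (Set.subset_inter hB2 hBq))
        · -- A ⊆ q.2, B ⊆ q.2 : use C ⊆ q.1
          rcases insep_side hR hp (hins C hC) with hCp | hCp
          · exact Or.inl (key_step hR hwell hp hmin hq hn hC hB
              (Set.subset_inter hCp hC1) (Set.subset_inter hB2 hBq))
          · exact Or.inr (key_step hR hwell hp hmin hfq hnnf hA hC
              (Set.subset_inter hA1 hAq) (Set.subset_inter hCp hC1))
  · intro hne
    classical
    obtain ⟨p, hp, hmin⟩ : ∃ a ∈ R, ∀ a' ∈ R,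
        (fun r : Set V × Set V => (r.1, OrderDual.toDual r.2)) a' ≤
          (fun r : Set V × Set V => (r.1, OrderDual.toDual r.2)) a →
        (fun r : Set V × Set V => (r.1, OrderDual.toDual r.2)) a =
          (fun r : Set V × Set V => (r.1, OrderDual.toDual r.2)) a' := by
      obtain ⟨a, ha, hm⟩ := Set.Finite.exists_minimalFor
        (fun r : Set V × Set V => (r.1, OrderDual.toDual r.2)) R (Set.toFinite R) hne
      exact ⟨a, ha, fun a' ha' h => le_antisymm (hm ha' h) h⟩
    refine ⟨p, hp, ?_⟩
    -- p is SepLE-minimal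
    have hmin' : ∀ q ∈ R, SepLE q p → q = p := by
      intro q hq hle
      have : (fun r : Set V × Set V => (r.1, OrderDual.toDual r.2)) q ≤
          (fun r : Set V × Set V => (r.1, OrderDual.toDual r.2)) p :=
        ⟨hle.1, hle.2⟩
      have := hmin q hq this
      have h1 : q.1 = p.1 := congrArg Prod.fst this.symm
      have h2 : q.2 = p.2 :=
        congrArg (fun x : Set V × (Set V)ᵒᵈ => OrderDual.ofDual x.2) this.symm
      exact Prod.ext h1 h2
    -- reuse the first part's argument
    intro q hq
    by_cases hn : Nested p q
    · rcases hn with (h1 | h2) | (h3 | h4)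
      · exact Or.inl h1
      · have := hmin' q hq h2; subst this; exact Or.inl ⟨subset_rfl, subset_rfl⟩
      · exact Or.inr h3
      · have := hmin' (flipSep q) (hR.2 q hq) h4
        rw [← this]; exact Or.inr ⟨subset_rfl, subset_rfl⟩
    · obtain ⟨I₁, hI₁, I₂, hI₂, _, hw⟩ := hrel p hp
      obtain ⟨A, hA, B, hB, hA1, hB2⟩ :
          ∃ A ∈ I, ∃ B ∈ I, A ⊆ p.1 ∧ B ⊆ p.2 := by
        rcases hw with ⟨h1, h2⟩ | ⟨h1, h2⟩
        · exact ⟨I₁, hI₁, I₂, hI₂, h1, h2⟩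
        · exact ⟨I₂, hI₂, I₁, hI₁, h2, h1⟩
      obtain ⟨J₁, hJ₁, J₂, hJ₂, _, hw'⟩ := hrel q hq
      obtain ⟨C, hC, D, hD, hC1, hD2⟩ :
          ∃ C ∈ I, ∃ D ∈ I, C ⊆ q.1 ∧ D ⊆ q.2 := by
        rcases hw' with ⟨h1, h2⟩ | ⟨h1, h2⟩
        · exact ⟨J₁, hJ₁, J₂, hJ₂, h1, h2⟩
        · exact ⟨J₂, hJ₂, J₁, hJ₁, h2, h1⟩
      have hfq : flipSep q ∈ R := hR.2 q hq
      have hnnf : ¬ Nested p (flipSep q) := not_nested_flip hn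
      rcases insep_side hR hq (hins A hA) with hAq | hAq
      · rcases insep_side hR hq (hins B hB) with hBq | hBq
        · rcases insep_side hR hp (hins D hD) with hDp | hDp
          · exact Or.inr (key_step hR hwell hp hmin' hfq hnnf hD hB
              (Set.subset_inter hDp hD2) (Set.subset_inter hB2 hBq))
          · exact Or.inl (key_step hR hwell hp hmin' hq hn hA hD
              (Set.subset_inter hA1 hAq) (Set.subset_inter hDp hD2))
        · exact Or.inl (key_step hR hwell hp hmin' hq hn hA hB
            (Set.subset_inter hA1 hAq) (Set.subset_inter hB2 hBq))
      · rcases insep_side hR hq (hins B hB) with hBq | hBq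
        · exact Or.inr (key_step hR hwell hp hmin' hfq hnnf hA hB
            (Set.subset_inter hA1 hAq) (Set.subset_inter hB2 hBq))
        · rcases insep_side hR hp (hins C hC) with hCp | hCp
          · exact Or.inl (key_step hR hwell hp hmin' hq hn hC hB
              (Set.subset_inter hCp hC1) (Set.subset_inter hB2 hBq))
          · exact Or.inr (key_step hR hwell hp hmin' hfq hnnf hA hC
              (Set.subset_inter hA1 hAq) (Set.subset_inter hCp hC1))
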